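/- Every tree on n vertices has pathwidth at most log₂(n). -/

import Mathlib

open Finset SimpleGraph

section PW
variable {V : Type} [DecidableEq V]

/-- The restriction of `G` to edges inside the finite set `S`. -/
def HG (G : SimpleGraph V) (S : Finset V) : SimpleGraph V where
  Adj a b := G.Adj a b ∧ a ∈ S ∧ b ∈ S
  symm := ⟨fun a b ⟨h, ha, hb⟩ => ⟨h.symm, hb, ha⟩⟩
  loopless := ⟨fun a h => G.loopless.irrefl a h.1⟩

lemma HG_le (G : SimpleGraph V) {S T : Finset V} (h : S ⊆ T) : HG G S ≤ HG G T :=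
  fun _ _ hab => ⟨hab.1, h hab.2.1, h hab.2.2⟩

/-- The connected component of `v` in the restriction of `G` to `S`. -/
noncomputable def comp (G : SimpleGraph V) (S : Finset V) (v : V) : Finset V :=
  @Finset.filter _ (fun w => (HG G S).Reachable v w) (Classical.decPred _) S

lemma mem_comp {G : SimpleGraph V} {S : Finset V} {v w : V} :
    w ∈ comp G S v ↔ w ∈ S ∧ (HG G S).Reachable v w := by
  simp [comp]

lemma comp_subset {G : SimpleGraph V} {S : Finset V} {v : V} : comp G S v ⊆ S :=
  fun _ hw => (mem_comp.mp hw).1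

lemma mem_comp_self {G : SimpleGraph V} {S : Finset V} {v : V} (hv : v ∈ S) :
    v ∈ comp G S v := mem_comp.mpr ⟨hv, Reachable.refl v⟩

lemma comp_congr {G : SimpleGraph V} {S : Finset V} {a b : V}
    (h : (HG G S).Reachable a b) : comp G S a = comp G S b := by
  ext w
  simp only [mem_comp]
  exact ⟨fun ⟨hw, hr⟩ => ⟨hw, h.symm.trans hr⟩, fun ⟨hw, hr⟩ => ⟨hw, h.trans hr⟩⟩

lemma comp_closed {G : SimpleGraph V} {S : Finset V} {v x y : V}
    (hx : x ∈ comp G S v) (hxy : (HG G S).Adj x y) : y ∈ comp G S v :=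
  mem_comp.mpr ⟨hxy.2.2, (mem_comp.mp hx).2.trans hxy.reachable⟩

/-- A walk in `HG G S` starting in a set `T` closed under `HG G S`-adjacency
stays in `T` and yields reachability in `HG G T`. -/
lemma walk_in {G : SimpleGraph V} {S T : Finset V}
    (hcl : ∀ x ∈ T, ∀ y, (HG G S).Adj x y → y ∈ T) {u w : V}
    (p : (HG G S).Walk u w) : u ∈ T → (HG G T).Reachable u w := by
  induction p with
  | nil => exact fun _ => Reachable.refl _
  | @cons a b c h q ih =>
      intro hu
      have hb := hcl a hu b h
      exact (SimpleGraph.Adj.reachable (show (HG G T).Adj a b from ⟨h.1, hu, hb⟩)).trans (ih hb)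

lemma comp_connected {G : SimpleGraph V} {S : Finset V} {v a b : V}
    (ha : a ∈ comp G S v) (hb : b ∈ comp G S v) :
    (HG G (comp G S v)).Reachable a b := by
  have hr : (HG G S).Reachable a b := (mem_comp.mp ha).2.symm.trans (mem_comp.mp hb).2
  exact hr.elim (fun p => walk_in (fun x hx y hxy => comp_closed hx hxy) p ha)

lemma sdiff_closed {G : SimpleGraph V} {S : Finset V} {v x y : V}
    (hx : x ∈ S \ comp G S v) (hxy : (HG G S).Adj x y) : y ∈ S \ comp G S v := by
  rw [Finset.mem_sdiff] at hx ⊢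
  refine ⟨hxy.2.2, fun hy => hx.2 (comp_closed hy hxy.symm)⟩

lemma comp_sdiff {G : SimpleGraph V} {S : Finset V} {v u : V}
    (hu : u ∈ S \ comp G S v) :
    comp G (S \ comp G S v) u = comp G S u := by
  ext w
  simp only [mem_comp]
  constructor
  · rintro ⟨hw, hr⟩
    exact ⟨(Finset.mem_sdiff.mp hw).1, hr.mono (HG_le G (Finset.sdiff_subset))⟩
  · rintro ⟨hw, hr⟩
    have hw' : w ∈ S \ comp G S v := by
      rw [Finset.mem_sdiff]
      refine ⟨hw, fun hwc => (Finset.mem_sdiff.mp hu).2 ?_⟩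
      exact mem_comp.mpr ⟨(Finset.mem_sdiff.mp hu).1,
        ((mem_comp.mp hwc).2.trans hr.symm)⟩
    exact ⟨hw', hr.elim (fun p => walk_in (fun x hx y hxy => sdiff_closed hx hxy) p hu)⟩

/-- `PD G S w` : there is a path decomposition of the part of `G` inside `S`
with all bags of size at most `w`. -/
def PD (G : SimpleGraph V) (S : Finset V) (w : ℕ) : Prop :=
  ∃ (ℓ : ℕ) (X : Fin ℓ → Finset V),
    (∀ i, X i ⊆ S) ∧
    (∀ v ∈ S, ∃ i, v ∈ X i) ∧
    (∀ u v, G.Adj u v → u ∈ S → v ∈ S → ∃ i, u ∈ X i ∧ v ∈ X i) ∧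
    (∀ v (i j k : Fin ℓ), i ≤ j → j ≤ k → v ∈ X i → v ∈ X k → v ∈ X j) ∧
    (∀ i, (X i).card ≤ w)

lemma PD_empty (G : SimpleGraph V) (w : ℕ) : PD G ∅ w := by
  refine ⟨0, Fin.elim0, ?_, ?_, ?_, ?_, ?_⟩ <;>
    first
      | exact fun i => i.elim0
      | simp

lemma PD.mono {G : SimpleGraph V} {S : Finset V} {w w' : ℕ} (h : PD G S w)
    (hw : w ≤ w') : PD G S w' := by
  obtain ⟨ℓ, X, h1, h2, h3, h4, h5⟩ := h
  exact ⟨ℓ, X, h1, h2, h3, h4, fun i => (h5 i).trans hw⟩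

lemma PD.union {G : SimpleGraph V} {S₁ S₂ : Finset V} {w : ℕ}
    (hdis : Disjoint S₁ S₂)
    (hedge : ∀ a b, G.Adj a b → a ∈ S₁ → b ∈ S₂ → False)
    (h1 : PD G S₁ w) (h2 : PD G S₂ w) : PD G (S₁ ∪ S₂) w := by
  obtain ⟨ℓ₁, X₁, hs1, hc1, he1, hi1, hw1⟩ := h1
  obtain ⟨ℓ₂, X₂, hs2, hc2, he2, hi2, hw2⟩ := h2
  refine ⟨ℓ₁ + ℓ₂, fun i => if h : (i : ℕ) < ℓ₁ then X₁ ⟨i, h⟩ else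
    X₂ ⟨(i : ℕ) - ℓ₁, by omega⟩, ?_, ?_, ?_, ?_, ?_⟩
  · intro i
    dsimp only
    split
    · exact (hs1 _).trans Finset.subset_union_left
    · exact (hs2 _).trans Finset.subset_union_right
  · intro v hv
    rcases Finset.mem_union.mp hv with hv | hv
    · obtain ⟨i, hi⟩ := hc1 v hv
      exact ⟨⟨i, by omega⟩, by simpa [i.isLt] using hi⟩
    · obtain ⟨i, hi⟩ := hc2 v hv
      refine ⟨⟨ℓ₁ + i, by omega⟩, ?_⟩
      simp only [dif_neg (by omega : ¬ (ℓ₁ + (i:ℕ) < ℓ₁))]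
      simpa using hi
  · intro u v hadj hu hv
    rcases Finset.mem_union.mp hu with hu | hu <;>
      rcases Finset.mem_union.mp hv with hv | hv
    · obtain ⟨i, hi⟩ := he1 u v hadj hu hv
      exact ⟨⟨i, by omega⟩, by simpa [i.isLt] using hi⟩
    · exact absurd (hedge u v hadj hu hv) (by simp)
    · exact absurd (hedge v u hadj.symm hv hu) (by simp)
    · obtain ⟨i, hi⟩ := he2 u v hadj hu hv
      refine ⟨⟨ℓ₁ + i, by omega⟩, ?_⟩
      simp only [dif_neg (by omega : ¬ (ℓ₁ + (i:ℕ) < ℓ₁))]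
      simpa using hi
  · intro v i j k hij hjk hvi hvk
    by_cases h1 : (i : ℕ) < ℓ₁
    · have hv1 : v ∈ S₁ := hs1 _ (by simpa [dif_pos h1] using hvi)
      have hk1 : (k : ℕ) < ℓ₁ := by
        by_contra hk
        have : v ∈ S₂ := hs2 _ (by simpa [dif_neg hk] using hvk)
        exact (Finset.disjoint_left.mp hdis hv1) this
      have hj1 : (j : ℕ) < ℓ₁ := lt_of_le_of_lt hjk hk1
      have := hi1 v ⟨i, h1⟩ ⟨j, hj1⟩ ⟨k, hk1⟩ hij hjk
        (by simpa [dif_pos h1] using hvi) (by simpa [dif_pos hk1] using hvk)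
      simpa [dif_pos hj1] using this
    · have hj1 : ¬ (j : ℕ) < ℓ₁ := by omega
      have hk1 : ¬ (k : ℕ) < ℓ₁ := by omega
      have := hi2 v ⟨(i:ℕ) - ℓ₁, by omega⟩ ⟨(j:ℕ) - ℓ₁, by omega⟩
        ⟨(k:ℕ) - ℓ₁, by omega⟩ (by simp [Fin.le_def]; omega) (by simp [Fin.le_def]; omega)
        (by simpa [dif_neg h1] using hvi) (by simpa [dif_neg hk1] using hvk)
      simpa [dif_neg hj1] using this
  · intro i
    dsimp only
    split
    · exact hw1 _
    · exact hw2 _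

lemma PD_split_aux {G : SimpleGraph V} {w : ℕ} :
    ∀ n (S : Finset V), S.card ≤ n →
      (∀ u ∈ S, PD G (comp G S u) w) → PD G S w := by
  intro n
  induction n with
  | zero =>
      intro S hS _
      rw [Nat.le_zero, Finset.card_eq_zero] at hS
      subst hS; exact PD_empty G w
  | succ n ih =>
      intro S hS hcomp
      rcases S.eq_empty_or_nonempty with rfl | ⟨v, hv⟩
      · exact PD_empty G w
      have hC : PD G (comp G S v) w := hcomp v hv
      have hS' : (S \ comp G S v).card ≤ n := by
        have h1 := Finset.card_sdiff_of_subset (comp_subset (G := G) (S := S) (v := v))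
        have h2 : 0 < (comp G S v).card := Finset.card_pos.mpr ⟨v, mem_comp_self hv⟩
        omega
      have hrest : PD G (S \ comp G S v) w := by
        refine ih _ hS' (fun u hu => ?_)
        rw [comp_sdiff hu]
        exact hcomp u (Finset.mem_sdiff.mp hu).1
      have := PD.union (Finset.disjoint_sdiff) ?_ hC hrest
      · rwa [Finset.union_sdiff_of_subset comp_subset] at this
      · intro a b hadj ha hb
        rw [Finset.mem_sdiff] at hb
        exact hb.2 (comp_closed ha ⟨hadj, comp_subset ha, hb.1⟩)

lemma PD_split {G : SimpleGraph V} {w : ℕ} {S : Finset V}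
    (hcomp : ∀ u ∈ S, PD G (comp G S u) w) : PD G S w :=
  PD_split_aux S.card S le_rfl hcomp

lemma PD.insert {G : SimpleGraph V} {S : Finset V} {w : ℕ} {c : V}
    (h : PD G S w) : PD G (insert c S) (w + 1) := by
  obtain ⟨ℓ, X, hs, hc, he, hi, hw⟩ := h
  refine ⟨ℓ + 1, fun i => if h : (i : ℕ) < ℓ then Insert.insert c (X ⟨i, h⟩) else {c},
    ?_, ?_, ?_, ?_, ?_⟩
  · intro i
    dsimp only; split
    · exact Finset.insert_subset_insert c (hs _)
    · simp
  · intro v hv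
    rcases Finset.mem_insert.mp hv with rfl | hv
    · exact ⟨⟨ℓ, by omega⟩, by simp⟩
    · obtain ⟨i, hi'⟩ := hc v hv
      exact ⟨⟨i, by omega⟩, by simp [i.isLt, Finset.mem_insert, hi']⟩
  · intro u v hadj hu hv
    rcases Finset.mem_insert.mp hu with hu1 | hu1
    · have hv' : v ∈ S := by
        rcases Finset.mem_insert.mp hv with hv1 | hv1
        · exact absurd hadj (hu1 ▸ hv1 ▸ G.loopless.irrefl v)
        · exact hv1
      obtain ⟨i, hi'⟩ := hc v hv'
      exact ⟨⟨i, by omega⟩, by simp [i.isLt, Finset.mem_insert, hi', hu1]⟩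
    · rcases Finset.mem_insert.mp hv with hv1 | hv1
      · obtain ⟨i, hi'⟩ := hc u hu1
        exact ⟨⟨i, by omega⟩, by simp [i.isLt, Finset.mem_insert, hi', hv1]⟩
      · obtain ⟨i, hi1, hi2⟩ := he u v hadj hu1 hv1
        exact ⟨⟨i, by omega⟩,
          by simp [i.isLt, Finset.mem_insert, hi1, hi2]⟩
  · intro v i j k hij hjk hvi hvk
    by_cases hvc : v = c
    · subst hvc
      dsimp only; split <;> simp
    · have hmem : ∀ (m : Fin (ℓ + 1)), v ∈ (if h : (m : ℕ) < ℓ then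
          Insert.insert c (X ⟨m, h⟩) else {c}) → (m : ℕ) < ℓ ∧
            ∀ (h' : (m : ℕ) < ℓ), v ∈ X ⟨m, h'⟩ := by
        intro m hm
        by_cases hml : (m : ℕ) < ℓ
        · rw [dif_pos hml] at hm
          rcases Finset.mem_insert.mp hm with rfl | hm
          · exact absurd rfl hvc
          · exact ⟨hml, fun _ => hm⟩
        · rw [dif_neg hml] at hm
          exact absurd (Finset.mem_singleton.mp hm) hvc
      obtain ⟨hil, hiX⟩ := hmem i hvi
      obtain ⟨hkl, hkX⟩ := hmem k hvk
      have hjl : (j : ℕ) < ℓ := lt_of_le_of_lt hjk hkl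
      have hij' : (i : ℕ) ≤ (j : ℕ) := hij
      have hjk' : (j : ℕ) ≤ (k : ℕ) := hjk
      have hres := hi v ⟨i, hil⟩ ⟨j, hjl⟩ ⟨k, hkl⟩ (Fin.mk_le_mk.mpr hij')
        (Fin.mk_le_mk.mpr hjk') (hiX hil) (hkX hkl)
      dsimp only
      rw [dif_pos hjl]
      exact Finset.mem_insert_of_mem hres
  · intro i
    dsimp only; split
    · exact (Finset.card_insert_le _ _).trans (by simp [hw])
    · simp

lemma exists_adj {G : SimpleGraph V} {S : Finset V} {c u : V}
    (p : (HG G S).Walk u c) : u ∈ S → u ≠ c →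
    ∃ x, x ∈ comp G (S.erase c) u ∧ G.Adj x c := by
  induction p with
  | nil => exact fun _ h => absurd rfl h
  | @cons a b d h q ih =>
      intro ha hac
      by_cases hbd : b = d
      · subst hbd
        exact ⟨a, mem_comp_self (Finset.mem_erase.mpr ⟨hac, ha⟩), h.1⟩
      · obtain ⟨x, hx, hxc⟩ := ih h.2.2 hbd
        refine ⟨x, ?_, hxc⟩
        have hadj : (HG G (S.erase d)).Adj a b :=
          ⟨h.1, Finset.mem_erase.mpr ⟨hac, ha⟩, Finset.mem_erase.mpr ⟨hbd, h.2.2⟩⟩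
        rw [comp_congr hadj.reachable]
        exact hx

lemma centroid {G : SimpleGraph V} {S : Finset V}
    (hacyc : G.IsAcyclic)
    (hconn : ∀ a ∈ S, ∀ b ∈ S, (HG G S).Reachable a b) (hS : S.Nonempty) :
    ∃ c ∈ S, ∀ u ∈ S.erase c, (comp G (S.erase c) u).card ≤ S.card / 2 := by
  obtain ⟨c, hc, hmin⟩ := S.exists_min_image
    (fun v => (S.erase v).sup (fun u => (comp G (S.erase v) u).card)) hS
  set m := fun v => (S.erase v).sup (fun u => (comp G (S.erase v) u).card) with hm
  refine ⟨c, hc, fun u hu => ?_⟩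
  by_contra hbig
  push_neg at hbig
  have hle : (comp G (S.erase c) u).card ≤ m c :=
    Finset.le_sup (f := fun u => (comp G (S.erase c) u).card) hu
  have hmc : S.card / 2 < m c := lt_of_lt_of_le hbig hle
  have hne : (S.erase c).Nonempty := by
    rcases Finset.eq_empty_or_nonempty (S.erase c) with he | hne
    · exfalso
      have h0 : m c = 0 := by simp [hm, he]
      omega
    · exact hne
  obtain ⟨u₀, hu₀, hsup⟩ := Finset.exists_mem_eq_sup (S.erase c) hne
    (fun u => (comp G (S.erase c) u).card)
  set C := comp G (S.erase c) u₀ with hCdef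
  have hmcC : m c = C.card := hsup
  have hCcard : S.card / 2 < C.card := hmcC ▸ hmc
  have hCS : C ⊆ S := comp_subset.trans (Finset.erase_subset c S)
  -- find x ∈ C adjacent to c
  have hu₀S : u₀ ∈ S := Finset.mem_of_mem_erase hu₀
  have hu₀c : u₀ ≠ c := (Finset.mem_erase.mp hu₀).1
  obtain ⟨p⟩ := hconn u₀ hu₀S c hc
  obtain ⟨x, hxC, hxc⟩ := exists_adj p hu₀S hu₀c
  have hxec : x ∈ S.erase c := comp_subset hxC
  have hxS : x ∈ S := Finset.mem_of_mem_erase hxec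
  have hxnec : x ≠ c := (Finset.mem_erase.mp hxec).1
  -- the edge x-c is a bridge
  have hbridge := (isAcyclic_iff_forall_adj_isBridge.mp hacyc) hxc
  have hnreach : ¬ (G \ fromEdgeSet {s(x, c)}).Reachable x c := (isBridge_iff.mp hbridge)
  have hle1 : HG G (S.erase x) ≤ G \ fromEdgeSet {s(x, c)} := by
    rintro a b ⟨hab, ha, hb⟩
    rw [sdiff_adj, fromEdgeSet_adj]
    refine ⟨hab, fun hmem => ?_⟩
    rcases Sym2.eq_iff.mp (Set.mem_singleton_iff.mp hmem.1) with ⟨h1, h2⟩ | ⟨h1, h2⟩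
    · exact (Finset.mem_erase.mp ha).1 h1
    · exact (Finset.mem_erase.mp hb).1 h2
  have hle2 : HG G (S.erase c) ≤ G \ fromEdgeSet {s(x, c)} := by
    rintro a b ⟨hab, ha, hb⟩
    rw [sdiff_adj, fromEdgeSet_adj]
    refine ⟨hab, fun hmem => ?_⟩
    rcases Sym2.eq_iff.mp (Set.mem_singleton_iff.mp hmem.1) with ⟨h1, h2⟩ | ⟨h1, h2⟩
    · exact (Finset.mem_erase.mp hb).1 h2
    · exact (Finset.mem_erase.mp ha).1 h1
  -- no vertex of C is reachable to c once x is removed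
  have hkey : ∀ w ∈ C, w ≠ x → ¬ (HG G (S.erase x)).Reachable w c := by
    intro w hwC hwx hreach
    have h1 : (HG G (S.erase c)).Reachable w x :=
      (mem_comp.mp hwC).2.symm.trans (mem_comp.mp hxC).2
    exact hnreach (((h1.mono hle2).symm.trans (hreach.mono hle1)))
  -- vertices outside C reach c in S.erase x
  have hin : ∀ z ∈ S.erase x, z ∉ C → z ≠ c → c ∈ comp G (S.erase x) z := by
    intro z hz hzC hzc
    have hzS : z ∈ S := Finset.mem_of_mem_erase hz
    have hzec : z ∈ S.erase c := Finset.mem_erase.mpr ⟨hzc, hzS⟩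
    set C' := comp G (S.erase c) z with hC'def
    have hxC' : x ∉ C' := by
      intro hx'
      have e1 : comp G (S.erase c) x = C' := comp_congr (mem_comp.mp hx').2.symm ▸ rfl
      have e2 : comp G (S.erase c) x = C := comp_congr (mem_comp.mp hxC).2.symm ▸ rfl
      exact hzC (e2 ▸ e1 ▸ mem_comp_self hzec)
    have hC'sub : C' ⊆ S.erase x := by
      intro w hw
      refine Finset.mem_erase.mpr ⟨fun hwx => hxC' (hwx ▸ hw), ?_⟩
      exact Finset.mem_of_mem_erase (comp_subset hw)
    obtain ⟨q⟩ := hconn z hzS c hc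
    obtain ⟨x', hx'C', hx'c⟩ := exists_adj q hzS hzc
    have hzx' : (HG G C').Reachable z x' :=
      (mem_comp.mp hx'C').2.elim (fun q' => walk_in
        (fun a ha b hab => comp_closed ha hab) q' (mem_comp_self hzec))
    have hreach : (HG G (S.erase x)).Reachable z c := by
      refine ((hzx'.mono (HG_le G hC'sub)).trans (Adj.reachable ?_))
      exact ⟨hx'c, hC'sub hx'C', Finset.mem_erase.mpr ⟨fun h => hxnec h.symm, hc⟩⟩
    exact mem_comp.mpr ⟨Finset.mem_erase.mpr ⟨fun h => hxnec h.symm, hc⟩, hreach⟩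
  have hxinC : x ∈ C := hxC
  have hsmall : ∀ z ∈ S.erase x, (comp G (S.erase x) z).card < m c := by
    intro z hz
    by_cases hcD : c ∈ comp G (S.erase x) z
    · have hDsub : comp G (S.erase x) z ⊆ S \ C := by
        intro w hw
        have hwex : w ∈ S.erase x := comp_subset hw
        rw [Finset.mem_sdiff]
        refine ⟨Finset.mem_of_mem_erase hwex, fun hwC => ?_⟩
        have hwc : (HG G (S.erase x)).Reachable w c :=
          (mem_comp.mp hw).2.symm.trans (mem_comp.mp hcD).2
        exact hkey w hwC (Finset.mem_erase.mp hwex).1 hwc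
      have hd1 := Finset.card_le_card hDsub
      rw [Finset.card_sdiff_of_subset hCS] at hd1
      have hCle := Finset.card_le_card hCS
      omega
    · have hDsub : comp G (S.erase x) z ⊆ C.erase x := by
        intro w hw
        have hwex : w ∈ S.erase x := comp_subset hw
        refine Finset.mem_erase.mpr ⟨(Finset.mem_erase.mp hwex).1, ?_⟩
        by_contra hwC
        have hwc : w ≠ c := fun h => hcD (h ▸ hw)
        have hcw := hin w hwex hwC hwc
        have hce : comp G (S.erase x) w = comp G (S.erase x) z :=
          (comp_congr (mem_comp.mp hw).2).symm
        exact hcD (hce ▸ hcw)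
      have hd1 := Finset.card_le_card hDsub
      rw [Finset.card_erase_of_mem hxinC] at hd1
      have hCpos : 0 < C.card := Finset.card_pos.mpr ⟨x, hxinC⟩
      omega
  have hmx : m x < m c := by
    have h0 : (0:ℕ) < m c := by omega
    exact (Finset.sup_lt_iff h0).mpr hsmall
  have hcontra : m c ≤ m x := hmin x hxS
  omega
lemma PD_main {G : SimpleGraph V} (hacyc : G.IsAcyclic) :
    ∀ n (S : Finset V), S.card ≤ n →
      (∀ a ∈ S, ∀ b ∈ S, (HG G S).Reachable a b) →
      PD G S (Nat.log 2 S.card + 1) := by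
  intro n
  induction n with
  | zero =>
      intro S hS _
      rw [Nat.le_zero, Finset.card_eq_zero] at hS
      subst hS; exact PD_empty _ _
  | succ n ih =>
      intro S hS hconn
      rcases S.eq_empty_or_nonempty with rfl | hSne
      · exact PD_empty _ _
      obtain ⟨c, hc, hcent⟩ := centroid hacyc hconn hSne
      have hT : ∀ u ∈ S.erase c, PD G (comp G (S.erase c) u) (Nat.log 2 S.card) := by
        intro u hu
        have he := Finset.card_erase_of_mem hc
        have hp : 0 < (S.erase c).card := Finset.card_pos.mpr ⟨u, hu⟩
        have hSpos : 0 < S.card := Finset.card_pos.mpr hSne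
        have h2 : 2 ≤ S.card := by omega
        have hcard := hcent u hu
        have hcle : (comp G (S.erase c) u).card ≤ n := by
          have h1 := Finset.card_le_card (comp_subset (G := G) (S := S.erase c) (v := u))
          omega
        have hconn' : ∀ a ∈ comp G (S.erase c) u, ∀ b ∈ comp G (S.erase c) u,
            (HG G (comp G (S.erase c) u)).Reachable a b :=
          fun a ha b hb => comp_connected ha hb
        have hpd := ih (comp G (S.erase c) u) hcle hconn'
        refine hpd.mono ?_
        have hlog1 : Nat.log 2 (comp G (S.erase c) u).card ≤ Nat.log 2 (S.card / 2) :=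
          Nat.log_mono_right hcard
        have hlog2 : Nat.log 2 (S.card / 2) = Nat.log 2 S.card - 1 :=
          Nat.log_div_base 2 S.card
        have hlog3 : 0 < Nat.log 2 S.card := Nat.log_pos (by norm_num) h2
        omega
      have hsplit := PD_split hT
      have hins := hsplit.insert (c := c)
      rwa [Finset.insert_erase hc] at hins

end PW

/-- `IsPathDecomp G X` : the sequence of bags `X 0, …, X (ℓ-1)` is a path
decomposition of `G`. -/
def IsPathDecomp {V : Type} (G : SimpleGraph V) {ℓ : ℕ} (X : Fin ℓ → Finset V) : Prop :=
  (∀ v : V, ∃ i, v ∈ X i) ∧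
  (∀ u v : V, G.Adj u v → ∃ i, u ∈ X i ∧ v ∈ X i) ∧
  (∀ (v : V) (i j k : Fin ℓ), i ≤ j → j ≤ k → v ∈ X i → v ∈ X k → v ∈ X j)

/-- The pathwidth of `G` : the minimum over all path decompositions of the
maximum bag size minus one. -/
noncomputable def pathwidth {V : Type} (G : SimpleGraph V) : ℕ :=
  sInf {w : ℕ | ∃ (ℓ : ℕ) (X : Fin ℓ → Finset V),
    IsPathDecomp G X ∧ ∀ i, (X i).card - 1 ≤ w}

/-- Every tree on `n` vertices has pathwidth at most `log₂ n`. -/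
theorem tree_pathwidth_log (V : Type) [Fintype V] (G : SimpleGraph V)
    (hG : G.IsTree) : pathwidth G ≤ Nat.log 2 (Fintype.card V) := by
  classical
  obtain ⟨ℓ, X, hsub, hcov, hedge, hint, hcard⟩ :=
    PD_main hG.IsAcyclic Finset.univ.card Finset.univ le_rfl
      (fun a _ b _ => ((hG.isConnected.preconnected a b).mono
        (fun u v h => ⟨h, Finset.mem_univ u, Finset.mem_univ v⟩)))
  apply Nat.sInf_le
  refine ⟨ℓ, X, ⟨fun v => hcov v (Finset.mem_univ v),
    fun u v h => hedge u v h (Finset.mem_univ u) (Finset.mem_univ v), hint⟩, fun i => ?_⟩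
  have hci := hcard i
  rw [Finset.card_univ] at hci
  omega
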